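/- Lemma 3.1 (characterization of the uncontrollable subspace): Let Z be a separable Hilbert space with orthonormal basis (φ_{nj})_{n≥1,1≤j≤r_n}, let the μ_n be pairwise distinct reals bounded above, let S(t) be the associated diagonal semigroup, g_1,…,g_p ∈ Z, and B* z = (⟨z,g_i⟩)_{i=1}^p. Define N = ∩_{t≥0} ker(B* S(t)*) and B_n ∈ ℝ^{p×r_n} with entries (B_n)_{ij} = ⟨g_i, φ_{nj}⟩. Then N equals the closed span of all vectors Σ_{j=1}^{r_n} α_j φ_{nj} over n ≥ 1 and α = (α_1,…,α_{r_n})^T ∈ ker B_n (i.e., B_n α = 0). -/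

import Mathlib

open scoped RealInnerProductSpace
open scoped ENNReal

lemma summable_abs_mul_of_sq {ι : Type*} {a b : ι → ℝ}
    (ha : Summable fun i => a i ^ 2) (hb : Summable fun i => b i ^ 2) :
    Summable fun i => |a i * b i| := by
  refine Summable.of_nonneg_of_le (fun i => abs_nonneg _) (fun i => ?_) ((ha.add hb).div_const 2)
  rw [abs_mul]
  nlinarith [sq_nonneg (|a i| - |b i|), sq_abs (a i), sq_abs (b i), abs_nonneg (a i),
    abs_nonneg (b i)]

lemma memℓp_two_of_le {ι : Type*} {a b : ι → ℝ}
    (hb : Summable fun i => b i ^ 2) (h : ∀ i, |a i| ≤ |b i|) :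
    Memℓp a 2 := by
  apply memℓp_gen
  have h2 : ((2 : ℝ≥0∞).toReal) = ((2 : ℕ) : ℝ) := by norm_num
  have key : ∀ i, ‖a i‖ ^ ((2 : ℝ≥0∞).toReal) = |a i| ^ (2 : ℕ) := by
    intro i
    rw [h2, Real.rpow_natCast, Real.norm_eq_abs]
  simp only [key]
  refine Summable.of_nonneg_of_le (fun i => by positivity) (fun i => ?_) hb
  calc |a i| ^ 2 ≤ |b i| ^ 2 := pow_le_pow_left₀ (abs_nonneg _) (h i) 2
    _ = b i ^ 2 := sq_abs _

lemma hilbert_hasSum_smul {ι : Type*} {Z : Type*} [NormedAddCommGroup Z]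
    [InnerProductSpace ℝ Z] [CompleteSpace Z] (φ : HilbertBasis ι ℝ Z)
    {a : ι → ℝ} (ha : Memℓp a 2) :
    HasSum (fun i => a i • (φ i : Z)) (φ.repr.symm ⟨a, ha⟩) :=
  φ.hasSum_repr_symm ⟨a, ha⟩

lemma hilbert_hasSum_inner_left {ι : Type*} {Z : Type*} [NormedAddCommGroup Z]
    [InnerProductSpace ℝ Z] [CompleteSpace Z] (φ : HilbertBasis ι ℝ Z)
    {a : ι → ℝ} (ha : Memℓp a 2) (w : Z) :
    HasSum (fun i => a i * ⟪(φ i : Z), w⟫) ⟪(φ.repr.symm ⟨a, ha⟩ : Z), w⟫ := by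
  have h := (hilbert_hasSum_smul φ ha).mapL (innerSL ℝ w)
  simp only [innerSL_apply_apply, real_inner_smul_right] at h
  rw [real_inner_comm (φ.repr.symm ⟨a, ha⟩) w] at h
  have heq : (fun i => a i * ⟪(φ i : Z), w⟫) = fun i => a i * ⟪w, (φ i : Z)⟫ :=
    funext fun i => by rw [real_inner_comm]
  rw [heq]
  exact h

lemma moment_zero {K : ℝ} {x : ℕ → ℝ} (hK : ∀ n, x n ∈ Set.Icc (0:ℝ) K)
    (hinj : Function.Injective x) {c : ℕ → ℝ} (hc : Summable fun n => |c n|)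
    (hmom : ∀ k : ℕ, ∑' n, c n * x n ^ k = 0) (n0 : ℕ) : c n0 = 0 := by
  classical
  by_contra hne
  set X : Set ℝ := Set.Icc 0 K with hX
  set L : C(X, ℝ) → ℝ := fun f => ∑' n, c n * f ⟨x n, hK n⟩ with hL
  have hsf : ∀ f : C(X, ℝ), Summable fun n => c n * f ⟨x n, hK n⟩ := by
    intro f
    refine Summable.of_norm ?_
    refine Summable.of_nonneg_of_le (fun n => norm_nonneg _) (fun n => ?_) (hc.mul_right ‖f‖)
    rw [norm_mul, Real.norm_eq_abs (c n)]
    exact mul_le_mul_of_nonneg_left (f.norm_coe_le_norm _) (abs_nonneg _)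
  have hcont : Continuous L := by
    have hC : (0:ℝ) ≤ ∑' n, |c n| := tsum_nonneg fun n => abs_nonneg _
    refine (LipschitzWith.of_dist_le_mul (K := ⟨_, hC⟩) ?_).continuous
    intro f g
    have h1 : L f - L g = ∑' n, (c n * f ⟨x n, hK n⟩ - c n * g ⟨x n, hK n⟩) :=
      ((hsf f).hasSum.sub (hsf g).hasSum).tsum_eq.symm
    rw [dist_eq_norm, h1]
    refine (norm_tsum_le_tsum_norm ?_).trans ?_
    · exact ((hsf f).sub (hsf g)).abs
    · have : ∀ n, ‖c n * f ⟨x n, hK n⟩ - c n * g ⟨x n, hK n⟩‖ ≤ |c n| * dist f g := by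
        intro n
        rw [← mul_sub, norm_mul, Real.norm_eq_abs (c n)]
        refine mul_le_mul_of_nonneg_left ?_ (abs_nonneg _)
        rw [Real.norm_eq_abs, ← Real.dist_eq]
        exact ContinuousMap.dist_apply_le_dist _
      refine (Summable.tsum_le_tsum this ((hsf f).sub (hsf g)).norm (hc.mul_right _)).trans ?_
      rw [tsum_mul_right]
      exact le_of_eq rfl
  have hpoly : ∀ f ∈ (polynomialFunctions X : Set C(X, ℝ)), L f = 0 := by
    intro f hf
    rw [polynomialFunctions_coe] at hf
    obtain ⟨p, rfl⟩ := hf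
    have hck : ∀ k : ℕ, Summable fun n => c n * x n ^ k := by
      intro k
      refine Summable.of_norm ?_
      refine Summable.of_nonneg_of_le (fun n => norm_nonneg _) (fun n => ?_) (hc.mul_right (K ^ k))
      rw [norm_mul, Real.norm_eq_abs (c n), Real.norm_eq_abs]
      refine mul_le_mul_of_nonneg_left ?_ (abs_nonneg _)
      rw [abs_pow, abs_of_nonneg (hK n).1]
      exact pow_le_pow_left₀ (hK n).1 (hK n).2 k
    have heval : ∀ n : ℕ, (Polynomial.toContinuousMapOnAlgHom X p) ⟨x n, hK n⟩
        = ∑ k ∈ Finset.range (p.natDegree + 1), p.coeff k * x n ^ k := by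
      intro n
      simp [Polynomial.toContinuousMapOnAlgHom, Polynomial.toContinuousMapOn,
        Polynomial.toContinuousMap]
      exact Polynomial.eval_eq_sum_range (p := p) (x n)
    have : L ((Polynomial.toContinuousMapOnAlgHom X) p)
        = ∑' n, ∑ k ∈ Finset.range (p.natDegree + 1), p.coeff k * (c n * x n ^ k) := by
      rw [hL]
      refine tsum_congr fun n => ?_
      rw [heval, Finset.mul_sum]
      exact Finset.sum_congr rfl fun k _ => by ring
    rw [this, Summable.tsum_finsetSum (fun k _ => (hck k).mul_left _)]
    refine Finset.sum_eq_zero fun k _ => ?_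
    rw [tsum_mul_left, hmom k, mul_zero]
  have hLzero : ∀ f : C(X, ℝ), L f = 0 := by
    intro f
    have hclosed : IsClosed {f : C(X, ℝ) | L f = 0} := isClosed_eq hcont continuous_const
    have hsubset : (polynomialFunctions X : Set C(X, ℝ)) ⊆ {f | L f = 0} := hpoly
    have hcl := closure_minimal hsubset hclosed
    have htop : closure (polynomialFunctions X : Set C(X, ℝ)) = Set.univ := by
      have := polynomialFunctions_closure_eq_top 0 K
      rw [← Subalgebra.topologicalClosure_coe, this]
      rfl
    rw [htop] at hcl
    exact hcl (Set.mem_univ f)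
  obtain ⟨T₀, hT₀⟩ : ∃ T₀ : Finset ℕ, ∀ T : Finset ℕ, T₀ ⊆ T →
      (∑' n : {m // m ∉ T}, |c (n : ℕ)|) < |c n0| := by
    have h1 := tendsto_tsum_compl_atTop_zero (fun n => |c n|)
    have h2 : Set.Iio (|c n0|) ∈ nhds (0:ℝ) := Iio_mem_nhds (abs_pos.mpr hne)
    obtain ⟨T₀, hT₀⟩ := (Filter.tendsto_atTop'.mp h1) _ h2
    exact ⟨T₀, fun T hT => hT₀ T hT⟩
  set T : Finset ℕ := insert n0 T₀ with hTdef
  have hTtail : (∑' n : {m // m ∉ T}, |c (n : ℕ)|) < |c n0| :=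
    hT₀ T (Finset.subset_insert _ _)
  obtain ⟨δ, hδpos, hδ⟩ : ∃ δ > 0, ∀ m ∈ T, m ≠ n0 → δ ≤ |x m - x n0| := by
    rcases (T.erase n0).eq_empty_or_nonempty with he | hne'
    · exact ⟨1, one_pos, fun m hm hmn =>
        absurd (Finset.mem_erase.mpr ⟨hmn, hm⟩) (by simp [he])⟩
    · refine ⟨((T.erase n0).image fun m => |x m - x n0|).min' (hne'.image _), ?_, ?_⟩
      · rw [gt_iff_lt, Finset.lt_min'_iff]
        intro y hy
        obtain ⟨m, hm, rfl⟩ := Finset.mem_image.mp hy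
        have : x m ≠ x n0 := fun h => (Finset.mem_erase.mp hm).1 (hinj h)
        exact abs_pos.mpr (sub_ne_zero.mpr this)
      · intro m hm hmn
        exact Finset.min'_le _ _ (Finset.mem_image.mpr ⟨m, Finset.mem_erase.mpr ⟨hmn, hm⟩, rfl⟩)
  set bump : C(X, ℝ) := ⟨fun y => max 0 (1 - |y.1 - x n0| / δ), by fun_prop⟩ with hbump
  have hbump_n0 : bump ⟨x n0, hK n0⟩ = 1 := by
    simp [hbump]
  have hbump_other : ∀ m ∈ T, m ≠ n0 → bump ⟨x m, hK m⟩ = 0 := by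
    intro m hm hmn
    have h1 : (1:ℝ) - |x m - x n0| / δ ≤ 0 := by
      have h2 := hδ m hm hmn
      rw [sub_nonpos, le_div_iff₀ hδpos]
      linarith
    simp only [hbump, ContinuousMap.coe_mk]
    exact max_eq_left h1
  have hbump_le : ∀ y : X, |bump y| ≤ 1 := by
    intro y
    rw [hbump]
    simp only [ContinuousMap.coe_mk]
    rw [abs_of_nonneg (le_max_left _ _)]
    refine max_le zero_le_one ?_
    have : 0 ≤ |y.1 - x n0| / δ := div_nonneg (abs_nonneg _) hδpos.le
    linarith
  have hsplit : (∑ n ∈ T, c n * bump ⟨x n, hK n⟩)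
      + (∑' n : {m // m ∉ T}, c (n:ℕ) * bump ⟨x n, hK n⟩) = L bump :=
    Summable.sum_add_tsum_compl (hsf bump)
  have hsum_T : (∑ n ∈ T, c n * bump ⟨x n, hK n⟩) = c n0 := by
    rw [Finset.sum_eq_single n0]
    · rw [hbump_n0, mul_one]
    · intro m hm hmn
      rw [hbump_other m hm hmn, mul_zero]
    · intro h
      exact absurd (Finset.mem_insert_self _ _) h
  have htail_le : |∑' n : {m // m ∉ T}, c (n:ℕ) * bump ⟨x n, hK n⟩|
      ≤ ∑' n : {m // m ∉ T}, |c (n:ℕ)| := by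
    refine (norm_tsum_le_tsum_norm ((hsf bump).subtype _).norm).trans ?_
    refine Summable.tsum_le_tsum (fun n => ?_) ((hsf bump).subtype _).norm (hc.subtype _)
    simp only [Function.comp_apply]
    rw [norm_mul, Real.norm_eq_abs (c (n:ℕ)), Real.norm_eq_abs]
    calc |c (n:ℕ)| * |bump ⟨x n, hK n⟩| ≤ |c (n:ℕ)| * 1 :=
          mul_le_mul_of_nonneg_left (hbump_le _) (abs_nonneg _)
      _ = |c (n:ℕ)| := mul_one _
  rw [hLzero bump, hsum_T] at hsplit
  have hfin : |c n0| ≤ ∑' n : {m // m ∉ T}, |c (n:ℕ)| := by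
    have heq : c n0 = -(∑' n : {m // m ∉ T}, c (n:ℕ) * bump ⟨x n, hK n⟩) := by linarith
    rw [heq, abs_neg]
    exact htail_le
  linarith


/-- Lemma 3.1: the uncontrollable subspace
`N = ∩_{t ≥ 0} ker (B* S(t)*)` equals the closed span of the vectors
`∑_j α_j φ_{nj}` with `α ∈ ker B_n`, i.e.
`∑_j α_j ⟪g_i, φ_{nj}⟫ = 0` for every `i`. -/
theorem uncontrollable_subspace_characterization
    {Z : Type*} [NormedAddCommGroup Z] [InnerProductSpace ℝ Z] [CompleteSpace Z]
    (r : ℕ → ℕ) (φ : HilbertBasis (Σ n : ℕ, Fin (r n)) ℝ Z)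
    (μ : ℕ → ℝ) (hμ : BddAbove (Set.range μ)) (hdist : Function.Injective μ)
    (p : ℕ) (g : Fin p → Z)
    (S : ℝ → Z → Z)
    (hS : ∀ t x, S t x = ∑' (i : (Σ n : ℕ, Fin (r n))),
        (Real.exp (μ i.1 * t) * ⟪x, φ i⟫) • (φ i : Z)) :
    {x : Z | ∀ t : ℝ, 0 ≤ t → ∀ i : Fin p, ⟪S t x, g i⟫ = 0} =
      closure (Submodule.span ℝ
        {x : Z | ∃ (n : ℕ) (α : Fin (r n) → ℝ),
          (∀ i : Fin p, ∑ j : Fin (r n), α j * ⟪g i, φ ⟨n, j⟩⟫ = 0) ∧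
          x = ∑ j : Fin (r n), α j • (φ ⟨n, j⟩ : Z)} : Set Z) := by
  classical
  obtain ⟨M, hM⟩ := hμ
  have hMn : ∀ n, μ n ≤ M := fun n => hM (Set.mem_range_self n)
  have hsq : ∀ z : Z, Summable fun i : Σ n : ℕ, Fin (r n) => ⟪z, φ i⟫ ^ 2 := by
    intro z
    exact (φ.summable_inner_mul_inner z z).congr fun i => by
      rw [real_inner_comm (φ i) z, ← sq]
  have hmem : ∀ (t : ℝ), 0 ≤ t → ∀ z : Z,
      Memℓp (fun i : Σ n : ℕ, Fin (r n) => Real.exp (μ i.1 * t) * ⟪z, φ i⟫) 2 := by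
    intro t ht z
    have hb : Summable fun i : Σ n : ℕ, Fin (r n) => (Real.exp (M * t) * ⟪z, φ i⟫) ^ 2 :=
      ((hsq z).mul_left (Real.exp (M * t) ^ 2)).congr fun i => by ring
    refine memℓp_two_of_le hb fun i => ?_
    rw [abs_mul, abs_mul]
    refine mul_le_mul_of_nonneg_right ?_ (abs_nonneg _)
    rw [abs_of_pos (Real.exp_pos _), abs_of_pos (Real.exp_pos _)]
    exact Real.exp_le_exp.mpr (mul_le_mul_of_nonneg_right (hMn i.1) ht)
  have hSsum : ∀ (t : ℝ), 0 ≤ t → ∀ x : Z,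
      HasSum (fun i : Σ n : ℕ, Fin (r n) => (Real.exp (μ i.1 * t) * ⟪x, φ i⟫) • (φ i : Z))
        (S t x) := by
    intro t ht x
    have h := hilbert_hasSum_smul φ (hmem t ht x)
    rw [hS t x]
    exact h.summable.hasSum
  have hinnerS : ∀ (t : ℝ), 0 ≤ t → ∀ x : Z, ∀ i : Fin p,
      HasSum (fun ι : Σ n : ℕ, Fin (r n) =>
        Real.exp (μ ι.1 * t) * ⟪x, φ ι⟫ * ⟪(φ ι : Z), g i⟫) ⟪S t x, g i⟫ := by
    intro t ht x i
    have h := (hSsum t ht x).mapL (innerSL ℝ (g i))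
    simp only [innerSL_apply_apply, real_inner_smul_right] at h
    rw [real_inner_comm (S t x) (g i)] at h
    have heq : (fun ι : Σ n : ℕ, Fin (r n) =>
        Real.exp (μ ι.1 * t) * ⟪x, φ ι⟫ * ⟪(φ ι : Z), g i⟫)
        = fun ι : Σ n : ℕ, Fin (r n) =>
          Real.exp (μ ι.1 * t) * ⟪x, φ ι⟫ * ⟪g i, (φ ι : Z)⟫ :=
      funext fun ι => by rw [real_inner_comm (g i) ((φ ι : Z))]
    rw [heq]
    exact h
  have hrep : ∀ t : ℝ, 0 ≤ t → ∀ i : Fin p, ∃ h : Z, ∀ x : Z, ⟪S t x, g i⟫ = ⟪h, x⟫ := by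
    intro t ht i
    have hm : Memℓp (fun ι : Σ n : ℕ, Fin (r n) => Real.exp (μ ι.1 * t) * ⟪g i, φ ι⟫) 2 :=
      hmem t ht (g i)
    refine ⟨φ.repr.symm ⟨_, hm⟩, fun x => ?_⟩
    have h1 := hinnerS t ht x i
    have h2 := hilbert_hasSum_inner_left φ hm x
    rw [← h1.tsum_eq, ← h2.tsum_eq]
    refine tsum_congr fun ι => ?_
    rw [real_inner_comm (g i) (φ ι), real_inner_comm ((φ ι : Z)) x]
    ring
  choose hv hhv using hrep
  ext x
  simp only [Set.mem_setOf_eq]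
  constructor
  · intro hx
    set c : Fin p → ℕ → ℝ :=
      fun i n => ∑ j : Fin (r n), ⟪x, φ ⟨n, j⟩⟫ * ⟪(φ ⟨n, j⟩ : Z), g i⟫ with hcdef
    have hczero : ∀ (i : Fin p) (n : ℕ), c i n = 0 := by
      intro i n
      have hmom : ∀ k : ℕ, ∑' m, c i m * Real.exp (μ m) ^ k = 0 := by
        intro k
        have h1 := hinnerS (k : ℝ) (Nat.cast_nonneg k) x i
        rw [hx (k : ℝ) (Nat.cast_nonneg k) i] at h1
        have h2 := h1.sigma fun m => hasSum_fintype _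
        have h3 : (fun m => ∑ j : Fin (r m),
            Real.exp (μ m * (k : ℝ)) * ⟪x, φ ⟨m, j⟩⟫ * ⟪(φ ⟨m, j⟩ : Z), g i⟫)
            = fun m => c i m * Real.exp (μ m) ^ k := by
          funext m
          simp only [hcdef]
          rw [Finset.sum_mul]
          refine Finset.sum_congr rfl fun j _ => ?_
          rw [← Real.exp_nat_mul, mul_comm (k : ℝ) (μ m)]
          ring
        rw [h3] at h2
        exact h2.tsum_eq
      have hgsq : Summable fun ι : Σ n : ℕ, Fin (r n) => ⟪(φ ι : Z), g i⟫ ^ 2 :=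
        (hsq (g i)).congr fun ι => by rw [real_inner_comm (φ ι) (g i)]
      have hd : Summable fun ι : Σ n : ℕ, Fin (r n) => |⟪x, φ ι⟫ * ⟪(φ ι : Z), g i⟫| :=
        summable_abs_mul_of_sq (hsq x) hgsq
      have hcabs : Summable fun n => |c i n| := by
        have h5 : Summable fun n => ∑' j : Fin (r n), |⟪x, φ ⟨n, j⟩⟫ * ⟪(φ ⟨n, j⟩ : Z), g i⟫| :=
          hd.sigma
        refine Summable.of_nonneg_of_le (fun n => abs_nonneg _) (fun n => ?_) h5
        rw [tsum_fintype]
        simp only [hcdef]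
        exact Finset.abs_sum_le_sum_abs _ _
      exact moment_zero (K := Real.exp M)
        (fun m => ⟨(Real.exp_pos _).le, Real.exp_le_exp.mpr (hMn m)⟩)
        (fun m m' h => hdist (Real.exp_injective h)) hcabs hmom n
    have hxsum : HasSum (fun n => ∑ j : Fin (r n), ⟪(φ ⟨n, j⟩ : Z), x⟫ • (φ ⟨n, j⟩ : Z)) x := by
      have h := φ.hasSum_repr x
      simp only [φ.repr_apply_apply] at h
      exact h.sigma fun n => hasSum_fintype _
    refine mem_closure_of_tendsto hxsum (Filter.Eventually.of_forall fun s => ?_)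
    simp only [SetLike.mem_coe]
    refine Submodule.sum_mem _ fun n _ => Submodule.subset_span ?_
    refine ⟨n, fun j => ⟪(φ ⟨n, j⟩ : Z), x⟫, fun i => ?_, rfl⟩
    have h6 := hczero i n
    simp only [hcdef] at h6
    rw [← h6]
    refine Finset.sum_congr rfl fun j _ => ?_
    dsimp only
    rw [real_inner_comm ((φ ⟨n, j⟩ : Z)) x, real_inner_comm (g i) ((φ ⟨n, j⟩ : Z))]
  · intro hx t ht i
    rw [hhv t ht i x]
    set Kr : Submodule ℝ Z := LinearMap.ker (innerSL ℝ (hv t ht i) : Z →ₗ[ℝ] ℝ) with hKrdef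
    have hON := orthonormal_iff_ite.mp φ.orthonormal
    have hgen : {y : Z | ∃ (n : ℕ) (α : Fin (r n) → ℝ),
        (∀ i : Fin p, ∑ j : Fin (r n), α j * ⟪g i, φ ⟨n, j⟩⟫ = 0) ∧
        y = ∑ j : Fin (r n), α j • (φ ⟨n, j⟩ : Z)} ⊆ (Kr : Set Z) := by
      rintro y ⟨n, α, hα, rfl⟩
      have hy : (⟪S t (∑ j : Fin (r n), α j • (φ ⟨n, j⟩ : Z)), g i⟫ : ℝ) = 0 := by
        have h1 := hinnerS t ht (∑ j : Fin (r n), α j • (φ ⟨n, j⟩ : Z)) i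
        have h2 := h1.sigma fun m => hasSum_fintype _
        have hin : ∀ (m : ℕ) (jm : Fin (r m)),
            (⟪(∑ j' : Fin (r n), α j' • (φ ⟨n, j'⟩ : Z)), φ ⟨m, jm⟩⟫ : ℝ)
            = ∑ j' : Fin (r n), α j' * ⟪(φ ⟨n, j'⟩ : Z), φ ⟨m, jm⟩⟫ := by
          intro m jm
          rw [sum_inner]
          exact Finset.sum_congr rfl fun j' _ => real_inner_smul_left _ _ _
        have h3 : (fun m => ∑ jm : Fin (r m),
            Real.exp (μ m * t) * ⟪(∑ j' : Fin (r n), α j' • (φ ⟨n, j'⟩ : Z)), φ ⟨m, jm⟩⟫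
              * ⟪(φ ⟨m, jm⟩ : Z), g i⟫) = fun _ => (0:ℝ) := by
          funext m
          by_cases hmn : m = n
          · subst hmn
            have hα' : ∀ jm : Fin (r m),
                (⟪(∑ j' : Fin (r m), α j' • (φ ⟨m, j'⟩ : Z)), φ ⟨m, jm⟩⟫ : ℝ) = α jm := by
              intro jm
              rw [hin m jm, Finset.sum_eq_single jm
                (fun j' _ hne => by rw [hON, if_neg (by simp [hne]), mul_zero])
                (fun h => absurd (Finset.mem_univ _) h), hON, if_pos rfl, mul_one]
            have hterm : ∀ jm : Fin (r m),
                Real.exp (μ m * t) * ⟪(∑ j' : Fin (r m), α j' • (φ ⟨m, j'⟩ : Z)), φ ⟨m, jm⟩⟫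
                  * ⟪(φ ⟨m, jm⟩ : Z), g i⟫
                = Real.exp (μ m * t) * (α jm * ⟪g i, (φ ⟨m, jm⟩ : Z)⟫) := by
              intro jm
              rw [hα' jm, real_inner_comm ((φ ⟨m, jm⟩ : Z)) (g i)]
              ring
            rw [Finset.sum_congr rfl fun jm _ => hterm jm, ← Finset.mul_sum, hα i, mul_zero]
          · refine Finset.sum_eq_zero fun jm _ => ?_
            have h0 : (⟪(∑ j' : Fin (r n), α j' • (φ ⟨n, j'⟩ : Z)), φ ⟨m, jm⟩⟫ : ℝ) = 0 := by
              rw [hin m jm]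
              refine Finset.sum_eq_zero fun j' _ => ?_
              rw [hON, if_neg (fun h => hmn (congrArg Sigma.fst h).symm), mul_zero]
            rw [h0, mul_zero, zero_mul]
        rw [h3] at h2
        exact (h2.unique hasSum_zero)
      rw [hhv t ht i] at hy
      exact LinearMap.mem_ker.mpr hy
    have hxK : x ∈ (Kr : Set Z) :=
      closure_minimal (fun z hz => Submodule.span_le.mpr hgen hz) (ContinuousLinearMap.isClosed_ker _) hx
    simpa [hKrdef, LinearMap.mem_ker, innerSL_apply_apply] using hxK
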